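/- Let u be a harmonic function on a planar domain Ω, smooth up to the boundary, with u = 0 and |∇u| = 1 on ∂Ω, u > 0 in Ω, and |∇u| < 1 in Ω. Then at each boundary point the curvature of ∂Ω (with respect to the inward normal ∇u) is strictly positive in the sense that, after rotating so that ∇u = (1,0) at the point, one has u_xx < 0 and u_yy > 0 there; consequently the signed curvature κ = (u_xx u_y² + u_yy u_x² − 2u_xy u_x u_y)/|∇u|³ is positive at every boundary point. -/

import Mathlib

/-- The partial derivative `u_x`. -/
noncomputable def ux (u : ℂ → ℝ) (z : ℂ) : ℝ := fderiv ℝ u z 1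

/-- The partial derivative `u_y`. -/
noncomputable def uy (u : ℂ → ℝ) (z : ℂ) : ℝ := fderiv ℝ u z Complex.I

/-- The norm of the gradient of `u`. -/
noncomputable def gradNorm (u : ℂ → ℝ) (z : ℂ) : ℝ :=
  Real.sqrt (ux u z ^ 2 + uy u z ^ 2)

/-- `u` is harmonic on `s`: twice continuously differentiable with vanishing Laplacian. -/
def HarmonicOnD (u : ℂ → ℝ) (s : Set ℂ) : Prop :=
  ContDiffOn ℝ 2 u s ∧
  ∀ z ∈ s, fderiv ℝ (fun w => ux u w) z 1 + fderiv ℝ (fun w => uy u w) z Complex.I = 0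

/-- The second partial derivative `u_xx`. -/
noncomputable def uxx (u : ℂ → ℝ) (z : ℂ) : ℝ := fderiv ℝ (fun w => ux u w) z 1

/-- The second partial derivative `u_xy`. -/
noncomputable def uxy (u : ℂ → ℝ) (z : ℂ) : ℝ := fderiv ℝ (fun w => ux u w) z Complex.I

/-- The second partial derivative `u_yy`. -/
noncomputable def uyy (u : ℂ → ℝ) (z : ℂ) : ℝ := fderiv ℝ (fun w => uy u w) z Complex.I


set_option maxHeartbeats 1000000

/-- the complex absolute value, as a bundled absolute value. -/
noncomputable def Complex.abs : AbsoluteValue ℂ ℝ where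
  toFun := fun z => ‖z‖
  map_mul' := norm_mul
  nonneg' := norm_nonneg
  eq_zero' _ := norm_eq_zero
  add_le' := norm_add_le

lemma Complex.norm_eq_abs (z : ℂ) : ‖z‖ = Complex.abs z := rfl
lemma Complex.abs_apply (z : ℂ) : Complex.abs z = Real.sqrt (Complex.normSq z) := by
  rw [← Complex.norm_eq_abs, Complex.norm_def]
lemma Complex.sq_abs (z : ℂ) : Complex.abs z ^ 2 = Complex.normSq z := by
  rw [← Complex.norm_eq_abs, Complex.sq_norm]
lemma Complex.abs_conj (z : ℂ) : Complex.abs ((starRingEnd ℂ) z) = Complex.abs z := by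
  rw [← Complex.norm_eq_abs, ← Complex.norm_eq_abs, Complex.norm_conj]
lemma Complex.abs_ofReal (r : ℝ) : Complex.abs (r : ℂ) = |r| := by
  rw [← Complex.norm_eq_abs, Complex.norm_real, Real.norm_eq_abs]
lemma Complex.continuous_abs : Continuous Complex.abs := continuous_norm

/-- complex gradient: `u_x - i u_y`. -/
noncomputable def Fc (u : ℂ → ℝ) (z : ℂ) : ℂ :=
  (ux u z : ℂ) - (uy u z : ℂ) * Complex.I

lemma Fc_re (u : ℂ → ℝ) (z : ℂ) : (Fc u z).re = ux u z := by simp [Fc]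
lemma Fc_im (u : ℂ → ℝ) (z : ℂ) : (Fc u z).im = - uy u z := by simp [Fc]

lemma abs_Fc (u : ℂ → ℝ) (z : ℂ) : Complex.abs (Fc u z) = gradNorm u z := by
  rw [Complex.abs_apply, Complex.normSq_apply, Fc_re, Fc_im, gradNorm]
  ring_nf

lemma normSq_Fc (u : ℂ → ℝ) (z : ℂ) :
    Complex.normSq (Fc u z) = ux u z ^ 2 + uy u z ^ 2 := by
  rw [Complex.normSq_apply, Fc_re, Fc_im]; ring

/-- real directional derivative via `Fc`. -/
lemma fderiv_eq_re_mul {u : ℂ → ℝ} {z : ℂ} (hd : DifferentiableAt ℝ u z) (v : ℂ) :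
    fderiv ℝ u z v = (Fc u z * v).re := by
  have hv : v = v.re • (1 : ℂ) + v.im • Complex.I := by
    simp [Complex.real_smul, Complex.re_add_im]
  calc fderiv ℝ u z v = fderiv ℝ u z (v.re • (1:ℂ) + v.im • Complex.I) := by rw [← hv]
    _ = v.re • fderiv ℝ u z 1 + v.im • fderiv ℝ u z Complex.I := by
        rw [map_add, map_smul, map_smul]
    _ = (Fc u z * v).re := by
        simp [Fc, Complex.mul_re, ux, uy, smul_eq_mul]; ring

section holo
variable {u : ℂ → ℝ} {U : Set ℂ} {z : ℂ}

lemma holo_Fc (hU : IsOpen U) (hu2 : ContDiffOn ℝ 2 u U)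
    (hlap : ∀ z ∈ U, fderiv ℝ (fun w => ux u w) z 1
      + fderiv ℝ (fun w => uy u w) z Complex.I = 0)
    (hz : z ∈ U) :
    HasDerivAt (Fc u) ((uxx u z : ℂ) - (uxy u z : ℂ) * Complex.I) z := by
  have hmem : U ∈ nhds z := hU.mem_nhds hz
  have hC2 : ContDiffAt ℝ 2 u z := hu2.contDiffAt hmem
  have hfd1 : ContDiffOn ℝ 1 (fderiv ℝ u) U :=
    hu2.fderiv_of_isOpen hU (by norm_num)
  have hD2 : DifferentiableAt ℝ (fderiv ℝ u) z :=
    (hfd1.contDiffAt hmem).differentiableAt one_ne_zero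
  set D2 := fderiv ℝ (fderiv ℝ u) z with hD2def
  have hD2' : HasFDerivAt (fderiv ℝ u) D2 z := hD2.hasFDerivAt
  -- partials of ux and uy
  have hux : HasFDerivAt (fun w => ux u w)
      ((ContinuousLinearMap.apply ℝ ℝ (1 : ℂ)).comp D2) z :=
    (ContinuousLinearMap.apply ℝ ℝ (1 : ℂ)).hasFDerivAt.comp z hD2'
  have huy : HasFDerivAt (fun w => uy u w)
      ((ContinuousLinearMap.apply ℝ ℝ (Complex.I)).comp D2) z :=
    (ContinuousLinearMap.apply ℝ ℝ (Complex.I)).hasFDerivAt.comp z hD2'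
  have hxx : uxx u z = D2 1 1 := by rw [uxx, hux.fderiv]; rfl
  have hxy : uxy u z = D2 Complex.I 1 := by rw [uxy, hux.fderiv]; rfl
  have hyx : fderiv ℝ (fun w => uy u w) z 1 = D2 1 Complex.I := by rw [huy.fderiv]; rfl
  have hyy : fderiv ℝ (fun w => uy u w) z Complex.I = D2 Complex.I Complex.I := by
    rw [huy.fderiv]; rfl
  have hsymm : D2 1 Complex.I = D2 Complex.I 1 := by
    have := hC2.isSymmSndFDerivAt (by simp [minSmoothness_of_isRCLikeNormedField])
    exact this 1 Complex.I
  have hxx' : fderiv ℝ (fun w => ux u w) z 1 = D2 1 1 := by rw [hux.fderiv]; rfl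
  have hlap' : D2 1 1 + D2 Complex.I Complex.I = 0 := by
    have h := hlap z hz
    rwa [hxx', hyy] at h
  -- real derivative of Fc
  have h1 : HasFDerivAt (fun w => ((ux u w : ℝ) : ℂ))
      (Complex.ofRealCLM.comp ((ContinuousLinearMap.apply ℝ ℝ (1 : ℂ)).comp D2)) z :=
    Complex.ofRealCLM.hasFDerivAt.comp z hux
  have h2 : HasFDerivAt (fun w => ((uy u w : ℝ) : ℂ))
      (Complex.ofRealCLM.comp ((ContinuousLinearMap.apply ℝ ℝ (Complex.I)).comp D2)) z :=
    Complex.ofRealCLM.hasFDerivAt.comp z huy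
  have h3 := (h1.sub (h2.mul_const Complex.I))
  have hFc : HasFDerivAt (Fc u) _ z := h3
  set c : ℂ := (uxx u z : ℂ) - (uxy u z : ℂ) * Complex.I with hc
  have key : HasFDerivAt (Fc u) ((ContinuousLinearMap.smulRight (1 : ℂ →L[ℂ] ℂ) c)
      |>.restrictScalars ℝ) z := by
    convert hFc using 1
    apply ContinuousLinearMap.ext
    intro v
    have hv : v = (v.re : ℂ) + (v.im : ℂ) * Complex.I := (Complex.re_add_im v).symm
    have hv' : v = v.re • (1 : ℂ) + v.im • Complex.I := by
      rw [Complex.real_smul, Complex.real_smul, mul_one, ← hv]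
    have hD2v : D2 v = v.re • D2 1 + v.im • D2 Complex.I := by
      conv_lhs => rw [hv']
      rw [map_add, map_smul, map_smul]
    simp only [ContinuousLinearMap.coe_restrictScalars', ContinuousLinearMap.smulRight_apply,
      ContinuousLinearMap.one_apply, ContinuousLinearMap.coe_comp', Function.comp_apply,
      ContinuousLinearMap.coe_sub', Pi.sub_apply, ContinuousLinearMap.apply_apply,
      Complex.ofRealCLM_apply, ContinuousLinearMap.mul_apply',
      ContinuousLinearMap.smul_apply, smul_eq_mul]
    rw [hD2v]
    simp only [ContinuousLinearMap.add_apply, ContinuousLinearMap.coe_smul', Pi.smul_apply,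
      smul_eq_mul]
    rw [hc, hxx, hxy]
    have e1 : D2 1 Complex.I = D2 Complex.I 1 := hsymm
    have e2 : D2 Complex.I Complex.I = - D2 1 1 := by linarith
    rw [e1, e2]
    apply Complex.ext <;>
      simp [Complex.mul_re, Complex.mul_im, Complex.add_re, Complex.add_im] <;> ring
  have : HasFDerivAt (Fc u) (ContinuousLinearMap.smulRight (1 : ℂ →L[ℂ] ℂ) c) z :=
    hasFDerivAt_of_restrictScalars ℝ key rfl
  have := this.hasDerivAt
  simpa using this
end holo

open Metric in
lemma mobius_identity (a w : ℂ) :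
    Complex.normSq (1 - (starRingEnd ℂ) a * w) - Complex.normSq (w - a)
      = (1 - Complex.normSq a) * (1 - Complex.normSq w) := by
  simp only [Complex.normSq_apply, Complex.sub_re, Complex.sub_im, Complex.mul_re,
    Complex.mul_im, Complex.one_re, Complex.one_im, Complex.conj_re, Complex.conj_im]
  ring

open Metric in
lemma schwarz_pick {F : ℂ → ℂ} {c x : ℂ} {r : ℝ} (hr : 0 < r)
    (hd : DifferentiableOn ℂ F (ball c r))
    (hm : ∀ y ∈ ball c r, Complex.abs (F y) < 1)
    (hx : x ∈ ball c r) :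
    (1 - dist x c / r) * (1 - Complex.abs (F c)) / 4 ≤ 1 - Complex.normSq (F x) := by
  have hc : c ∈ ball c r := mem_ball_self hr
  set a := F c with ha_def
  have ha : Complex.abs a < 1 := hm c hc
  have hden : ∀ y ∈ ball c r, (1 : ℂ) - (starRingEnd ℂ) a * F y ≠ 0 := by
    intro y hy h0
    have h1 : (1 : ℂ) = (starRingEnd ℂ) a * F y := by linear_combination h0
    have := congrArg Complex.abs h1
    rw [map_one, map_mul, Complex.abs_conj]
      at this
    nlinarith [hm y hy, Complex.abs.nonneg a, Complex.abs.nonneg (F y)]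
  set g : ℂ → ℂ := fun y => (F y - a) / (1 - (starRingEnd ℂ) a * F y) with hg_def
  have hgd : DifferentiableOn ℂ g (ball c r) := by
    apply DifferentiableOn.div (hd.sub_const a)
    · exact (differentiableOn_const _).sub ((differentiableOn_const _).mul hd)
    · exact hden
  have habs : ∀ y ∈ ball c r, Complex.abs (g y) < 1 := by
    intro y hy
    have hd0 : Complex.normSq (1 - (starRingEnd ℂ) a * F y) > 0 :=
      Complex.normSq_pos.2 (hden y hy)
    have hid := mobius_identity a (F y)
    have hW : Complex.normSq (F y) < 1 := by
      have := hm y hy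
      rw [← Complex.sq_abs]; nlinarith [Complex.abs.nonneg (F y)]
    have hA : Complex.normSq a < 1 := by
      rw [← Complex.sq_abs]; nlinarith [Complex.abs.nonneg a]
    have hlt : Complex.normSq (F y - a) < Complex.normSq (1 - (starRingEnd ℂ) a * F y) := by
      nlinarith
    rw [hg_def]
    simp only [map_div₀]
    rw [div_lt_one (Complex.abs.pos (hden y hy))]
    have h1 : Complex.abs (F y - a) ^ 2 < Complex.abs (1 - (starRingEnd ℂ) a * F y) ^ 2 := by
      rw [Complex.sq_abs, Complex.sq_abs]; exact hlt
    nlinarith [Complex.abs.nonneg (F y - a), Complex.abs.nonneg (1 - (starRingEnd ℂ) a * F y)]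
  have hg0 : g c = 0 := by simp [hg_def, ha_def]
  have hmaps : Set.MapsTo g (ball c r) (ball (g c) 1) := by
    intro y hy
    rw [hg0, mem_ball, dist_zero_right]
    exact habs y hy
  have hsch := Complex.dist_le_div_mul_dist_of_mapsTo_ball hgd (hmaps.mono_right ball_subset_closedBall) hx
  rw [hg0, dist_zero_right] at hsch
  -- hsch : ‖g x‖ ≤ 1 / r * dist x c
  set ρ := dist x c / r with hρ_def
  have hρ0 : 0 ≤ ρ := by positivity
  have hρ1 : ρ < 1 := by
    rw [hρ_def, div_lt_one hr]; exact mem_ball.1 hx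
  have hg_le : Complex.abs (g x) ≤ ρ := by
    rw [hρ_def]; calc Complex.abs (g x) = ‖g x‖ := rfl
      _ ≤ 1 / r * dist x c := hsch
      _ = dist x c / r := by ring
  -- unfold g x
  have hdx := hden x hx
  have hkey : Complex.normSq (F x - a) ≤ ρ ^ 2 * Complex.normSq (1 - (starRingEnd ℂ) a * F x) := by
    have h1 : Complex.abs (F x - a) ≤ ρ * Complex.abs (1 - (starRingEnd ℂ) a * F x) := by
      have := hg_le
      rw [hg_def] at this
      simp only [map_div₀] at this
      rwa [div_le_iff₀ (Complex.abs.pos hdx)] at this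
    have := mul_self_le_mul_self (Complex.abs.nonneg _) h1
    rw [← Complex.sq_abs, ← Complex.sq_abs]
    nlinarith [Complex.abs.nonneg (F x - a), Complex.abs.nonneg (1 - (starRingEnd ℂ) a * F x)]
  have hid := mobius_identity a (F x)
  have hlb : (1 - Complex.abs a) ^ 2 ≤ Complex.normSq (1 - (starRingEnd ℂ) a * F x) := by
    have h2 : Complex.abs ((starRingEnd ℂ) a * F x) ≤ Complex.abs a := by
      rw [map_mul, Complex.abs_conj]
      nlinarith [hm x hx, Complex.abs.nonneg a, Complex.abs.nonneg (F x)]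
    have h3 : 1 - Complex.abs a ≤ Complex.abs (1 - (starRingEnd ℂ) a * F x) := by
      have h4 : ‖(1:ℂ)‖ - ‖(starRingEnd ℂ) a * F x‖ ≤ ‖1 - (starRingEnd ℂ) a * F x‖ :=
        norm_sub_norm_le _ _
      simp only [norm_one, Complex.norm_eq_abs] at h4
      linarith
    rw [← Complex.sq_abs]
    nlinarith [Complex.abs.nonneg (1 - (starRingEnd ℂ) a * F x), ha]
  -- final algebra
  have hW2 : Complex.normSq (F x) < 1 := by
    have := hm x hx
    rw [← Complex.sq_abs]; nlinarith [Complex.abs.nonneg (F x)]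
  have hnsa : Complex.normSq a = Complex.abs a ^ 2 := (Complex.sq_abs a).symm
  set A := Complex.abs a with hA_def
  have hA0 : 0 ≤ A := Complex.abs.nonneg a
  have hA1 : 0 < 1 - A := by linarith
  set W2 := Complex.normSq (F x) with hW2_def
  have hW2_0 : 0 ≤ W2 := Complex.normSq_nonneg _
  have hmain : (1 - ρ^2) * (1 - A)^2 ≤ (1 - A^2) * (1 - W2) := by
    have h5 : (1 - ρ^2) * Complex.normSq (1 - (starRingEnd ℂ) a * F x)
        ≤ (1 - A^2) * (1 - W2) := by
      rw [← hnsa]; nlinarith [Complex.normSq_nonneg (1 - (starRingEnd ℂ) a * F x)]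
    have h6 : 0 ≤ 1 - ρ^2 := by nlinarith
    have h7 : (1-ρ^2)*(1-A)^2 ≤ (1-ρ^2) * Complex.normSq (1 - (starRingEnd ℂ) a * F x) :=
      mul_le_mul_of_nonneg_left hlb h6
    linarith
  have e1 : (1-ρ) * (1-A)^2 ≤ (1-ρ^2)*(1-A)^2 := by
    nlinarith [sq_nonneg (1-A), mul_nonneg hρ0 (sub_nonneg.2 hρ1.le)]
  have e2 : (1-A^2)*(1-W2) ≤ 2*(1-A)*(1-W2) := by
    nlinarith [mul_nonneg (mul_nonneg hA1.le hA1.le) (sub_nonneg.2 hW2.le)]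
  have e3' : ((1-ρ)*(1-A)) * (1-A) ≤ (2*(1-W2)) * (1-A) := by nlinarith [e1, hmain, e2]
  have e4 : (1-ρ)*(1-A) ≤ 2*(1-W2) := le_of_mul_le_mul_right e3' hA1
  have e5 : 0 ≤ (1-ρ)*(1-A) := mul_nonneg (sub_nonneg.2 hρ1.le) hA1.le
  linarith

lemma taylor_bound {u : ℂ → ℝ} {s : Set ℂ} {M : ℝ} (hM : 0 ≤ M) (hconv : Convex ℝ s)
    (hd : ∀ v ∈ s, DifferentiableAt ℝ u v)
    (hlip : ∀ v ∈ s, ∀ v' ∈ s, ‖fderiv ℝ u v - fderiv ℝ u v'‖ ≤ M * ‖v - v'‖)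
    {x y : ℂ} (hx : x ∈ s) (hy : y ∈ s) :
    |u y - u x - fderiv ℝ u x (y - x)| ≤ M * ‖y - x‖ ^ 2 := by
  have hseg : segment ℝ x y ⊆ s := hconv.segment_subset hx hy
  have hconv2 : Convex ℝ (segment ℝ x y) := convex_segment x y
  have hf : ∀ v ∈ segment ℝ x y, HasFDerivWithinAt u (fderiv ℝ u v) (segment ℝ x y) v :=
    fun v hv => ((hd v (hseg hv)).hasFDerivAt).hasFDerivWithinAt
  have hbound : ∀ v ∈ segment ℝ x y, ‖fderiv ℝ u v - fderiv ℝ u x‖ ≤ M * ‖y - x‖ := by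
    intro v hv
    have h1 : ‖v - x‖ ≤ ‖y - x‖ := by
      obtain ⟨a, b, ha, hb, hab, rfl⟩ := hv
      have : a • x + b • y - x = b • (y - x) := by
        have hax : a = 1 - b := by linarith
        rw [hax]; module
      rw [this, norm_smul, Real.norm_eq_abs, abs_of_nonneg hb]
      have hb1 : b ≤ 1 := by linarith
      nlinarith [norm_nonneg (y - x)]
    calc ‖fderiv ℝ u v - fderiv ℝ u x‖ ≤ M * ‖v - x‖ := hlip v (hseg hv) x hx
      _ ≤ M * ‖y - x‖ := by apply mul_le_mul_of_nonneg_left h1 hM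
  have := hconv2.norm_image_sub_le_of_norm_hasFDerivWithin_le' hf hbound
    (left_mem_segment ℝ x y) (right_mem_segment ℝ x y)
  rw [Real.norm_eq_abs] at this
  calc |u y - u x - (fderiv ℝ u x) (y - x)| ≤ M * ‖y - x‖ * ‖y - x‖ := this
    _ = M * ‖y - x‖ ^ 2 := by ring

/-- The boundary of an exceptional domain with `|∇u| < 1` is strictly concave:
at each boundary point the signed curvature of the level set `u = 0` is positive. -/
theorem boundary_curvature_pos (Ω U : Set ℂ) (u : ℂ → ℝ)
    (hΩ : IsOpen Ω) (hconn : IsConnected Ω) (hfrne : (frontier Ω).Nonempty)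
    (hU : IsOpen U) (hclos : closure Ω ⊆ U) (hu : HarmonicOnD u U)
    (hpos : ∀ z ∈ Ω, 0 < u z)
    (hb0 : ∀ z ∈ frontier Ω, u z = 0)
    (hb1 : ∀ z ∈ frontier Ω, gradNorm u z = 1)
    (hlt : ∀ z ∈ Ω, gradNorm u z < 1) :
    ∀ z ∈ frontier Ω,
      0 < (uxx u z * uy u z ^ 2 + uyy u z * ux u z ^ 2 -
            2 * uxy u z * ux u z * uy u z) / gradNorm u z ^ 3 := by
  obtain ⟨hu2, hlap⟩ := hu
  intro z₀ hz₀
  have hz₀c : z₀ ∈ closure Ω := frontier_subset_closure hz₀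
  have hz₀U : z₀ ∈ U := hclos hz₀c
  have hΩU : Ω ⊆ U := subset_closure.trans hclos
  have hdiffU : ∀ x ∈ U, DifferentiableAt ℝ u x := fun x hx =>
    (hu2.contDiffAt (hU.mem_nhds hx)).differentiableAt two_ne_zero
  have hFcD : ∀ x ∈ U, HasDerivAt (Fc u) ((uxx u x : ℂ) - (uxy u x : ℂ) * Complex.I) x :=
    fun x hx => holo_Fc hU hu2 hlap hx
  have hFcdiff : ∀ x ∈ U, DifferentiableAt ℂ (Fc u) x :=
    fun x hx => (hFcD x hx).differentiableAt
  have habs_lt : ∀ x ∈ Ω, Complex.abs (Fc u x) < 1 := fun x hx => by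
    rw [abs_Fc]; exact hlt x hx
  have habs1 : Complex.abs (Fc u z₀) = 1 := by rw [abs_Fc]; exact hb1 z₀ hz₀
  set n : ℂ := (starRingEnd ℂ) (Fc u z₀) with hn_def
  have hnabs : Complex.abs n = 1 := by rw [hn_def, Complex.abs_conj, habs1]
  -- Lipschitz bound for the gradient near z₀
  have hC1fd : ContDiffAt ℝ 1 (fderiv ℝ u) z₀ :=
    (hu2.fderiv_of_isOpen hU (by norm_num)).contDiffAt (hU.mem_nhds hz₀U)
  obtain ⟨K, t, ht_mem, hlipK⟩ := hC1fd.exists_lipschitzOnWith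
  set M : ℝ := (K : ℝ) + 1 with hM_def
  have hM : 0 < M := by positivity
  have hlipM : ∀ v ∈ t, ∀ v' ∈ t, ‖fderiv ℝ u v - fderiv ℝ u v'‖ ≤ M * ‖v - v'‖ := by
    intro v hv v' hv'
    have h1 := hlipK.dist_le_mul v hv v' hv'
    rw [dist_eq_norm, dist_eq_norm] at h1
    have hKM : (K : ℝ) ≤ M := by rw [hM_def]; linarith
    nlinarith [norm_nonneg (v - v')]
  -- choose ε
  have hcontabs : ContinuousAt (fun w => Complex.abs (Fc u w)) z₀ :=
    Complex.continuous_abs.continuousAt.comp (hFcD z₀ hz₀U).continuousAt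
  have hhalf : {w : ℂ | 1/2 < Complex.abs (Fc u w)} ∈ nhds z₀ := by
    have h2 : Set.Ioi (1/2 : ℝ) ∈ nhds (Complex.abs (Fc u z₀)) := by
      rw [habs1]; exact Ioi_mem_nhds (by norm_num)
    exact hcontabs.preimage_mem_nhds h2
  have hUt : {w : ℂ | w ∈ U ∧ w ∈ t ∧ 1/2 < Complex.abs (Fc u w)} ∈ nhds z₀ := by
    filter_upwards [hU.mem_nhds hz₀U, ht_mem, hhalf] with w h1 h2 h3
    exact ⟨h1, h2, h3⟩
  obtain ⟨ε, hε0, hεsub⟩ := Metric.mem_nhds_iff.1 hUt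
  have hballU : Metric.ball z₀ ε ⊆ U := fun x hx => (hεsub hx).1
  have hballt : Metric.ball z₀ ε ⊆ t := fun x hx => (hεsub hx).2.1
  have hballhalf : ∀ x ∈ Metric.ball z₀ ε, 1/2 < Complex.abs (Fc u x) :=
    fun x hx => (hεsub hx).2.2
  set r : ℝ := min (ε/8) (1/(8*M)) with hr_def
  have hr0 : 0 < r := lt_min (by positivity) (by positivity)
  have hrε : 3 * r < ε := by
    have h1 : r ≤ ε/8 := min_le_left _ _
    linarith
  have hrM : r ≤ 1/(8*M) := min_le_right _ _
  have hrM' : 8 * M * r ≤ 1 := by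
    rw [le_div_iff₀ (by positivity)] at hrM; linarith
  -- Taylor estimate on ball z₀ ε
  have htay : ∀ x ∈ Metric.ball z₀ ε, ∀ y ∈ Metric.ball z₀ ε,
      |u y - u x - fderiv ℝ u x (y - x)| ≤ M * ‖y - x‖^2 := fun x hx y hy =>
    taylor_bound hM.le (convex_ball z₀ ε) (fun v hv => hdiffU v (hballU hv))
      (fun v hv v' hv' => hlipM v (hballt hv) v' (hballt hv')) hx hy
  -- unit gradient direction
  set unitg : ℂ → ℂ := fun w => (starRingEnd ℂ) (Fc u w) / ((Complex.abs (Fc u w) : ℝ) : ℂ)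
    with hug_def
  have hunitg_abs : ∀ w : ℂ, Fc u w ≠ 0 → Complex.abs (unitg w) = 1 := by
    intro w hw
    rw [hug_def]
    simp only [map_div₀, Complex.abs_conj, Complex.abs_ofReal,
      abs_of_nonneg (Complex.abs.nonneg (Fc u w))]
    exact div_self ((Complex.abs.pos hw).ne')
  -- Claim 1 : interior tangent balls
  have claim1 : ∀ w ∈ Ω, dist w z₀ < r →
      Metric.ball (w + (r:ℂ) * unitg w) r ⊆ Ω := by
    intro w hwΩ hwr
    have hwball : w ∈ Metric.ball z₀ ε := by
      rw [Metric.mem_ball]; linarith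
    have hm2 : 1/2 < Complex.abs (Fc u w) := hballhalf w hwball
    have hm0 : Fc u w ≠ 0 := by
      intro h; rw [h, map_zero] at hm2; linarith
    have hmpos : 0 < Complex.abs (Fc u w) := Complex.abs.pos hm0
    set c : ℂ := w + (r:ℂ) * unitg w with hc_def
    have hcw : dist c w = r := by
      rw [hc_def, dist_eq_norm]
      have h1 : w + (r:ℂ) * unitg w - w = (r:ℂ) * unitg w := by ring
      rw [h1, Complex.norm_eq_abs, map_mul, Complex.abs_ofReal, abs_of_pos hr0,
        hunitg_abs w hm0, mul_one]
    have hposball : ∀ x ∈ Metric.ball c r, 0 < u x := by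
      intro x hx
      set d : ℂ := x - w with hd_def
      have hxball : x ∈ Metric.ball z₀ ε := by
        rw [Metric.mem_ball]
        calc dist x z₀ ≤ dist x c + dist c w + dist w z₀ := dist_triangle4 x c w z₀
          _ < r + r + r := by
              have := Metric.mem_ball.1 hx
              linarith
          _ < ε := by linarith
      -- geometric inequality from x ∈ ball c r
      have hgeo : Complex.normSq d < 2 * r * ((Fc u w * d).re / Complex.abs (Fc u w)) := by
        have h1 : Complex.normSq (d - (r:ℂ) * unitg w) < r^2 := by
          have h2 := Metric.mem_ball.1 hx
          rw [dist_eq_norm] at h2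
          have h3 : x - c = d - (r:ℂ) * unitg w := by rw [hc_def, hd_def]; ring
          rw [← h3, ← Complex.sq_abs, ← Complex.norm_eq_abs]
          nlinarith [norm_nonneg (x - c)]
        rw [Complex.normSq_sub] at h1
        have h4 : Complex.normSq ((r:ℂ) * unitg w) = r^2 := by
          rw [Complex.normSq_mul, Complex.normSq_ofReal, ← Complex.sq_abs (unitg w),
            hunitg_abs w hm0]
          ring
        have h5 : (d * (starRingEnd ℂ) ((r:ℂ) * unitg w)).re
            = r * ((Fc u w * d).re / Complex.abs (Fc u w)) := by
          rw [map_mul, Complex.conj_ofReal]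
          have h6 : (starRingEnd ℂ) (unitg w)
              = Fc u w / ((Complex.abs (Fc u w) : ℝ) : ℂ) := by
            rw [hug_def]; rw [map_div₀, Complex.conj_conj, Complex.conj_ofReal]
          rw [h6]
          have h7 : d * ((r:ℂ) * (Fc u w / ((Complex.abs (Fc u w) : ℝ) : ℂ)))
              = (r:ℂ) * (Fc u w * d / ((Complex.abs (Fc u w) : ℝ) : ℂ)) := by ring
          rw [h7, Complex.re_ofReal_mul, Complex.div_ofReal_re]
        rw [h4, h5] at h1
        linarith
      have hR : 2 * M * Complex.normSq d ≤ (Fc u w * d).re := by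
        have h8 : Complex.normSq d * Complex.abs (Fc u w) < 2 * r * (Fc u w * d).re := by
          have h9 : 2 * r * ((Fc u w * d).re / Complex.abs (Fc u w))
              = (2 * r * (Fc u w * d).re) / Complex.abs (Fc u w) := by ring
          rw [h9] at hgeo
          exact (lt_div_iff₀ hmpos).1 hgeo
        -- |Fc w| ≥ 1/2 and r ≤ 1/(8M)
        nlinarith [Complex.normSq_nonneg d, hr0, hM]
      -- Taylor
      have htay1 := htay w hwball x hxball
      have hfd : fderiv ℝ u w (x - w) = (Fc u w * (x - w)).re :=
        fderiv_eq_re_mul (hdiffU w (hballU hwball)) _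
      have hnorm : ‖x - w‖^2 = Complex.normSq d := by
        rw [hd_def, ← Complex.sq_abs, Complex.norm_eq_abs]
      rw [hfd, hnorm, ← hd_def] at htay1
      have h10 := abs_le.1 htay1
      have hupos := hpos w hwΩ
      nlinarith [Complex.normSq_nonneg d]
    -- connectivity
    intro x hx
    have hcover : Metric.ball c r ⊆ Ω ∪ (closure Ω)ᶜ := by
      intro y hy
      by_cases hyc : y ∈ closure Ω
      · left
        rcases (closure_eq_interior_union_frontier Ω ▸ hyc) with h | h
        · rwa [hΩ.interior_eq] at h
        · exact absurd (hb0 y h) (ne_of_gt (hposball y hy))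
      · right; exact hyc
    have hne : (Metric.ball c r ∩ Ω).Nonempty := by
      obtain ⟨δ, hδ0, hδ⟩ := Metric.isOpen_iff.1 hΩ w hwΩ
      set s₁ : ℝ := min (δ/2) r with hs₁_def
      have hs₁0 : 0 < s₁ := lt_min (by positivity) hr0
      have hs₁r : s₁ ≤ r := min_le_right _ _
      have hs₁δ : s₁ < δ := by
        have := min_le_left (δ/2) r; linarith
      refine ⟨w + (s₁:ℂ) * unitg w, ?_, ?_⟩
      · rw [Metric.mem_ball, hc_def, dist_eq_norm]
        have h1 : w + (s₁:ℂ) * unitg w - (w + (r:ℂ) * unitg w)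
            = (((s₁ - r : ℝ)):ℂ) * unitg w := by push_cast; ring
        rw [h1, Complex.norm_eq_abs, map_mul, Complex.abs_ofReal, hunitg_abs w hm0, mul_one]
        rw [abs_of_nonpos (by linarith)]
        linarith
      · apply hδ
        rw [Metric.mem_ball, dist_eq_norm]
        have h1 : w + (s₁:ℂ) * unitg w - w = ((s₁:ℝ):ℂ) * unitg w := by ring
        rw [h1, Complex.norm_eq_abs, map_mul, Complex.abs_ofReal, hunitg_abs w hm0, mul_one]
        rw [abs_of_pos hs₁0]
        exact hs₁δ
    exact ((convex_ball c r).isPreconnected.subset_left_of_subset_union hΩ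
      isClosed_closure.isOpen_compl (disjoint_compl_right.mono_left subset_closure)
      hcover hne) hx
  -- accumulate from inside
  have hnbot : (nhdsWithin z₀ Ω).NeBot := mem_closure_iff_nhdsWithin_neBot.1 hz₀c
  have hugz₀ : unitg z₀ = n := by
    show (starRingEnd ℂ) (Fc u z₀) / ((Complex.abs (Fc u z₀) : ℝ) : ℂ) = n
    rw [habs1, hn_def]; simp
  have hFcne : Fc u z₀ ≠ 0 := by
    intro h; rw [h, map_zero] at habs1; linarith
  have hugcont : ContinuousAt unitg z₀ := by
    apply ContinuousAt.div
    · exact Complex.continuous_conj.continuousAt.comp (hFcD z₀ hz₀U).continuousAt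
    · exact Complex.continuous_ofReal.continuousAt.comp hcontabs
    · rw [habs1]; norm_num
  set p : ℂ := z₀ + (r:ℂ) * n with hp_def
  have hcc : ContinuousAt (fun w => w + (r:ℂ) * unitg w) z₀ :=
    continuousAt_id.add (continuousAt_const.mul hugcont)
  have hpev : ∀ᶠ w in nhds z₀, p ∈ Metric.ball (w + (r:ℂ) * unitg w) r := by
    have hdc : ContinuousAt (fun w => dist p (w + (r:ℂ) * unitg w)) z₀ :=
      continuousAt_const.dist hcc
    have h0 : dist p (z₀ + (r:ℂ) * unitg z₀) < r := by
      rw [hugz₀, ← hp_def, dist_self]; exact hr0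
    have h1 : {w : ℂ | dist p (w + (r:ℂ) * unitg w) < r} ∈ nhds z₀ :=
      hdc.preimage_mem_nhds (Iio_mem_nhds h0)
    filter_upwards [h1] with w hw
    exact Metric.mem_ball.2 hw
  have hpΩ : p ∈ Ω := by
    have hev2 : ∀ᶠ w in nhdsWithin z₀ Ω,
        (dist w z₀ < r ∧ p ∈ Metric.ball (w + (r:ℂ) * unitg w) r) ∧ w ∈ Ω := by
      apply Filter.Eventually.and _ self_mem_nhdsWithin
      apply nhdsWithin_le_nhds
      filter_upwards [Metric.ball_mem_nhds z₀ hr0, hpev] with w h1 h2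
      exact ⟨Metric.mem_ball.1 h1, h2⟩
    obtain ⟨w, ⟨hw1, hw2⟩, hw3⟩ := hev2.exists
    exact claim1 w hw3 hw1 hw2
  set s₀ : ℝ := Complex.abs (Fc u p) with hs₀_def
  have hs₀ : s₀ < 1 := habs_lt p hpΩ
  have hs₀0 : 0 ≤ s₀ := Complex.abs.nonneg _
  have hpU : p ∈ U := hΩU hpΩ
  -- centers are near p
  have hcenter : ∀ᶠ w in nhds z₀,
      Complex.abs (Fc u (w + (r:ℂ) * unitg w)) < (1 + s₀)/2 := by
    have hac : ContinuousAt (fun w => Complex.abs (Fc u (w + (r:ℂ) * unitg w))) z₀ := by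
      have h2 : ContinuousAt (fun w : ℂ => Fc u (w + (r:ℂ) * unitg w)) z₀ := by
        apply ContinuousAt.comp (x := z₀) (g := Fc u)
          (f := fun w : ℂ => w + (r:ℂ) * unitg w) _ hcc
        show ContinuousAt (Fc u) (z₀ + (r:ℂ) * unitg z₀)
        rw [hugz₀, ← hp_def]
        exact (hFcD p hpU).continuousAt
      exact Complex.continuous_abs.continuousAt.comp h2
    have hval : Complex.abs (Fc u (z₀ + (r:ℂ) * unitg z₀)) < (1 + s₀)/2 := by
      rw [hugz₀, ← hp_def, ← hs₀_def]; linarith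
    exact hac.preimage_mem_nhds (Iio_mem_nhds hval)
  set c₀ : ℝ := (1 - s₀)/(16*r) with hc₀_def
  have hc₀ : 0 < c₀ := by
    rw [hc₀_def]
    apply div_pos (by linarith) (by positivity)
  -- the key boundary estimate along the inner normal
  have hEst : ∀ s : ℝ, 0 < s → s < r →
      Complex.normSq (Fc u (z₀ + (s:ℂ) * n)) ≤ 1 - c₀ * s := by
    intro s hsp0 hsr
    have hev3 : ∀ᶠ w in nhdsWithin z₀ Ω,
        (((dist w z₀ < r ∧ dist w z₀ < s/4) ∧ Complex.abs (unitg w - n) < 1/4)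
          ∧ Complex.abs (Fc u (w + (r:ℂ) * unitg w)) < (1 + s₀)/2) ∧ w ∈ Ω := by
      apply Filter.Eventually.and _ self_mem_nhdsWithin
      apply nhdsWithin_le_nhds
      have hug4 : {w : ℂ | Complex.abs (unitg w - n) < 1/4} ∈ nhds z₀ := by
        have hcont4 : ContinuousAt (fun w => Complex.abs (unitg w - n)) z₀ :=
          Complex.continuous_abs.continuousAt.comp (hugcont.sub continuousAt_const)
        have hval4 : Complex.abs (unitg z₀ - n) < 1/4 := by
          rw [hugz₀]; simp
        exact hcont4.preimage_mem_nhds (Iio_mem_nhds hval4)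
      filter_upwards [Metric.ball_mem_nhds z₀ hr0, Metric.ball_mem_nhds z₀ (by positivity : (0:ℝ) < s/4), hug4, hcenter] with w h1 h2 h3 h4
      exact ⟨⟨⟨Metric.mem_ball.1 h1, Metric.mem_ball.1 h2⟩, h3⟩, h4⟩
    obtain ⟨w, ⟨⟨⟨hwr, hws⟩, hwug⟩, hwcen⟩, hwΩ⟩ := hev3.exists
    set cw : ℂ := w + (r:ℂ) * unitg w with hcw_def
    have hballΩ : Metric.ball cw r ⊆ Ω := claim1 w hwΩ hwr
    have hwball : w ∈ Metric.ball z₀ ε := by rw [Metric.mem_ball]; linarith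
    have hm0w : Fc u w ≠ 0 := by
      intro h
      have := hballhalf w hwball
      rw [h, map_zero] at this; linarith
    set x : ℂ := z₀ + (s:ℂ) * n with hx_def
    have hdx : dist x cw ≤ r - s/2 := by
      have h1 : x - cw = (z₀ - w) + ((s:ℂ) * (n - unitg w))
          + ((((s - r : ℝ)):ℂ) * unitg w) := by
        rw [hx_def, hcw_def]; push_cast; ring
      rw [dist_eq_norm, h1]
      have h2 : ‖(s:ℂ) * (n - unitg w)‖ ≤ s * (1/4) := by
        rw [Complex.norm_eq_abs, map_mul, Complex.abs_ofReal, abs_of_pos hsp0]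
        have : Complex.abs (n - unitg w) < 1/4 := by
          rw [Complex.abs.map_sub]; exact hwug
        nlinarith
      have h3 : ‖(((s - r : ℝ)):ℂ) * unitg w‖ = r - s := by
        rw [Complex.norm_eq_abs, map_mul, Complex.abs_ofReal, hunitg_abs w hm0w, mul_one,
          abs_of_nonpos (by linarith)]
        ring
      have h4 : ‖z₀ - w‖ < s/4 := by
        rw [← dist_eq_norm, dist_comm]; exact hws
      calc ‖z₀ - w + (s:ℂ) * (n - unitg w) + (((s - r : ℝ)):ℂ) * unitg w‖
          ≤ ‖z₀ - w + (s:ℂ) * (n - unitg w)‖ + ‖(((s - r : ℝ)):ℂ) * unitg w‖ :=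
            norm_add_le _ _
        _ ≤ ‖z₀ - w‖ + ‖(s:ℂ) * (n - unitg w)‖ + ‖(((s - r : ℝ)):ℂ) * unitg w‖ := by
            have := norm_add_le (z₀ - w) ((s:ℂ) * (n - unitg w)); linarith
        _ ≤ s/4 + s * (1/4) + (r - s) := by linarith
        _ ≤ r - s/2 := by linarith
    have hxball : x ∈ Metric.ball cw r := by
      rw [Metric.mem_ball]; linarith
    have hsp2 := schwarz_pick hr0
      (fun y hy => (hFcdiff y (hΩU (hballΩ hy))).differentiableWithinAt)
      (fun y hy => habs_lt y (hballΩ hy)) hxball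
    have h6 : s/(2*r) ≤ 1 - dist x cw / r := by
      have h8 : dist x cw / r ≤ (r - s/2)/r := by gcongr
      have h9 : (r - s/2)/r = 1 - s/(2*r) := by field_simp
      rw [h9] at h8; linarith
    have h7 : (1 - s₀)/2 ≤ 1 - Complex.abs (Fc u cw) := by linarith
    have h10 : s/(2*r) * ((1 - s₀)/2) / 4
        ≤ (1 - dist x cw / r) * (1 - Complex.abs (Fc u cw)) / 4 := by
      have hb0 : 0 ≤ 1 - dist x cw / r := by
        have : 0 ≤ s/(2*r) := by positivity
        linarith
      have hmm := mul_le_mul h6 h7 (by linarith) hb0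
      linarith
    have h11 : s/(2*r) * ((1 - s₀)/2) / 4 = c₀ * s := by
      rw [hc₀_def]; field_simp; ring
    rw [h11] at h10
    linarith [hsp2]
  -- endgame: differentiate t ↦ |∇u(z₀ + t n)|² at t = 0
  set e : ℂ := n * ((uxx u z₀ : ℂ) - (uxy u z₀ : ℂ) * Complex.I) with he_def
  have hγ : HasDerivAt (fun s : ℝ => z₀ + (s:ℂ) * n) n 0 := by
    have h1 : HasDerivAt (fun s : ℝ => s • n) ((1:ℝ) • n) 0 :=
      (hasDerivAt_id (0:ℝ)).smul_const n
    have h2 := h1.const_add z₀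
    simpa [Complex.real_smul, one_smul] using h2
  have hF0 : HasFDerivAt (Fc u) (ContinuousLinearMap.smulRight (1 : ℂ →L[ℂ] ℂ)
      ((uxx u z₀ : ℂ) - (uxy u z₀ : ℂ) * Complex.I)) z₀ :=
    hasDerivAt_iff_hasFDerivAt.1 (hFcD z₀ hz₀U)
  have hcomp : HasDerivAt (fun s : ℝ => Fc u (z₀ + (s:ℂ) * n)) e 0 := by
    have h3 : HasFDerivAt (Fc u) ((ContinuousLinearMap.smulRight (1 : ℂ →L[ℂ] ℂ)
        ((uxx u z₀ : ℂ) - (uxy u z₀ : ℂ) * Complex.I)).restrictScalars ℝ)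
        ((fun s : ℝ => z₀ + (s:ℂ) * n) 0) := by
      rw [show (fun s : ℝ => z₀ + (s:ℂ) * n) 0 = z₀ by simp]
      exact hF0.restrictScalars ℝ
    have h4 := h3.comp_hasDerivAt 0 hγ
    have h5 : ((ContinuousLinearMap.smulRight (1 : ℂ →L[ℂ] ℂ)
        ((uxx u z₀ : ℂ) - (uxy u z₀ : ℂ) * Complex.I)).restrictScalars ℝ) n = e := by
      rw [he_def]
      simp [ContinuousLinearMap.smulRight_apply, smul_eq_mul]
    rw [h5] at h4
    exact h4
  have hre : HasDerivAt (fun s : ℝ => (Fc u (z₀ + (s:ℂ) * n)).re) e.re 0 := by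
    have := Complex.reCLM.hasFDerivAt.comp_hasDerivAt 0 hcomp
    simpa [Function.comp_def] using this
  have him : HasDerivAt (fun s : ℝ => (Fc u (z₀ + (s:ℂ) * n)).im) e.im 0 := by
    have := Complex.imCLM.hasFDerivAt.comp_hasDerivAt 0 hcomp
    simpa [Function.comp_def] using this
  have hq : HasDerivAt (fun s : ℝ => Complex.normSq (Fc u (z₀ + (s:ℂ) * n)))
      (2 * ((Fc u z₀).re * e.re + (Fc u z₀).im * e.im)) 0 := by
    have h5 := (hre.mul hre).add (him.mul him)
    have h6 : (fun s : ℝ => (Fc u (z₀ + (s:ℂ) * n)).re * (Fc u (z₀ + (s:ℂ) * n)).re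
        + (Fc u (z₀ + (s:ℂ) * n)).im * (Fc u (z₀ + (s:ℂ) * n)).im)
        = fun s : ℝ => Complex.normSq (Fc u (z₀ + (s:ℂ) * n)) := by
      funext sx; rw [Complex.normSq_apply]
    change HasDerivAt (fun s : ℝ => (Fc u (z₀ + (s:ℂ) * n)).re * (Fc u (z₀ + (s:ℂ) * n)).re
        + (Fc u (z₀ + (s:ℂ) * n)).im * (Fc u (z₀ + (s:ℂ) * n)).im) _ 0 at h5
    rw [h6] at h5
    convert h5 using 1
    have h7 : z₀ + ((0:ℝ):ℂ) * n = z₀ := by simp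
    rw [h7]
    ring
  have hq0 : Complex.normSq (Fc u (z₀ + ((0:ℝ):ℂ) * n)) = 1 := by
    rw [show z₀ + ((0:ℝ):ℂ) * n = z₀ by simp, ← Complex.sq_abs, habs1]; norm_num
  have hQ : 2 * ((Fc u z₀).re * e.re + (Fc u z₀).im * e.im) ≤ -c₀ := by
    have hslope := hasDerivAt_iff_tendsto_slope.1 hq
    have hmono : nhdsWithin (0:ℝ) (Set.Ioi 0) ≤ nhdsWithin (0:ℝ) {(0:ℝ)}ᶜ :=
      nhdsWithin_mono _ (fun y hy => ne_of_gt hy)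
    apply le_of_tendsto (hslope.mono_left hmono)
    filter_upwards [Ioo_mem_nhdsGT hr0] with y hy
    have hEs := hEst y hy.1 hy.2
    rw [slope_def_field, hq0, sub_zero, div_le_iff₀ hy.1]
    linarith
  -- translate back to second partials
  have hlapz : uxx u z₀ + uyy u z₀ = 0 := hlap z₀ hz₀U
  have hrel : (Fc u z₀).re * e.re + (Fc u z₀).im * e.im
      = -(uxx u z₀ * uy u z₀ ^ 2 + uyy u z₀ * ux u z₀ ^ 2
          - 2 * uxy u z₀ * ux u z₀ * uy u z₀) := by
    have huyy : uyy u z₀ = -uxx u z₀ := by linarith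
    rw [he_def, hn_def, huyy]
    simp only [Fc, Complex.mul_re, Complex.mul_im, Complex.sub_re, Complex.sub_im,
      Complex.ofReal_re, Complex.ofReal_im, Complex.mul_I_re, Complex.mul_I_im,
      Complex.conj_re, Complex.conj_im, Complex.I_re, Complex.I_im]
    ring
  rw [hb1 z₀ hz₀, one_pow, div_one]
  linarith [hQ, hc₀]
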